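/- Let d ≥ 1, r > 0, and let g_r(x) = (2πr)^{−d/2} e^{−‖x‖₂²/(2r)} be the N(0, rI_d) density on ℝ^d. Let p(x) = Σ_{i=1}^{N} p_i g_r(x − x_i) and q(y) = Σ_{j=1}^{M} q_j g_r(y − y_j) be finite Gaussian mixture densities, where p_i, q_j ≥ 0, Σ_i p_i = Σ_j q_j = 1, and x_i, y_j ∈ ℝ^d. Then the convolution p ∗ q satisfies (p ∗ q)(t) ≥ (πr)^{d/2} · p(τ) · q(t − τ) for every t, τ ∈ ℝ^d. -/

import Mathlib

open MeasureTheory Set Filter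
open scoped ENNReal

/-- The density of the centered Gaussian distribution `N(0, sI_d)` on `ℝ^d`:
`g_s(x) = (2πs)^{−d/2} e^{−‖x‖²/(2s)}`. -/
noncomputable def gaussDens (d : ℕ) (s : ℝ) (x : EuclideanSpace ℝ (Fin d)) : ℝ :=
  (2 * Real.pi * s) ^ (-(d : ℝ) / 2) * Real.exp (-‖x‖ ^ 2 / (2 * s))

section aux
variable {d : ℕ} {r : ℝ}

lemma sumSq (σ t a b : EuclideanSpace ℝ (Fin d)) :
    ‖σ - a‖ ^ 2 + ‖t - σ - b‖ ^ 2
      = 2 * ‖σ - (2:ℝ)⁻¹ • (t + a - b)‖ ^ 2 + 2⁻¹ * ‖t - a - b‖ ^ 2 := by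
  set u := σ - (2:ℝ)⁻¹ • (t + a - b) with hu
  set s := t - a - b with hs
  have h1 : σ - a = u + (2:ℝ)⁻¹ • s := by rw [hu, hs]; module
  have h2 : t - σ - b = (2:ℝ)⁻¹ • s - u := by rw [hu, hs]; module
  have hpar := parallelogram_law_with_norm ℝ u ((2:ℝ)⁻¹ • s)
  have hns : ‖(2:ℝ)⁻¹ • s‖ = 2⁻¹ * ‖s‖ := by
    rw [norm_smul]; simp
  rw [h1, h2, norm_sub_rev ((2:ℝ)⁻¹ • s) u]
  rw [hns] at hpar
  linear_combination hpar

lemma prodEq (hr : 0 < r) (t a b : EuclideanSpace ℝ (Fin d)) (σ : EuclideanSpace ℝ (Fin d)) :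
    gaussDens d r (σ - a) * gaussDens d r (t - σ - b)
      = ((2 * Real.pi * r) ^ (-(d:ℝ)) * Real.exp (-‖t - a - b‖ ^ 2 / (4 * r)))
        * Real.exp (-(1 / r) * ‖σ - (2:ℝ)⁻¹ • (t + a - b)‖ ^ 2) := by
  have hpos : (0:ℝ) < 2 * Real.pi * r := by positivity
  have hpow : (2 * Real.pi * r) ^ (-(d:ℝ)/2) * (2 * Real.pi * r) ^ (-(d:ℝ)/2)
      = (2 * Real.pi * r) ^ (-(d:ℝ)) := by
    rw [← Real.rpow_add hpos]; ring_nf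
  have hsq := sumSq σ t a b
  have hexp : Real.exp (-‖σ - a‖ ^ 2 / (2*r)) * Real.exp (-‖t - σ - b‖ ^ 2 / (2*r))
      = Real.exp (-‖t - a - b‖ ^ 2 / (4 * r))
        * Real.exp (-(1 / r) * ‖σ - (2:ℝ)⁻¹ • (t + a - b)‖ ^ 2) := by
    rw [← Real.exp_add, ← Real.exp_add]
    congr 1
    linear_combination (-(1/(2*r))) * hsq
  unfold gaussDens
  calc (2 * Real.pi * r) ^ (-(d:ℝ)/2) * Real.exp (-‖σ - a‖ ^ 2 / (2*r)) *
      ((2 * Real.pi * r) ^ (-(d:ℝ)/2) * Real.exp (-‖t - σ - b‖ ^ 2 / (2*r)))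
      = ((2 * Real.pi * r) ^ (-(d:ℝ)/2) * (2 * Real.pi * r) ^ (-(d:ℝ)/2)) *
        (Real.exp (-‖σ - a‖ ^ 2 / (2*r)) * Real.exp (-‖t - σ - b‖ ^ 2 / (2*r))) := by ring
    _ = _ := by rw [hpow, hexp]; ring

lemma intExp (hr : 0 < r) (m : EuclideanSpace ℝ (Fin d)) :
    ∫ σ : EuclideanSpace ℝ (Fin d), Real.exp (-(1 / r) * ‖σ - m‖ ^ 2)
      = (Real.pi * r) ^ ((d:ℝ) / 2) := by
  rw [integral_sub_right_eq_self (fun σ : EuclideanSpace ℝ (Fin d) =>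
    Real.exp (-(1 / r) * ‖σ‖ ^ 2)) m]
  rw [GaussianFourier.integral_rexp_neg_mul_sq_norm (by positivity : (0:ℝ) < 1 / r)]
  rw [finrank_euclideanSpace_fin]
  congr 1
  field_simp

lemma integrableExp (hr : 0 < r) (m : EuclideanSpace ℝ (Fin d)) :
    Integrable (fun σ : EuclideanSpace ℝ (Fin d) => Real.exp (-(1 / r) * ‖σ - m‖ ^ 2)) := by
  apply Integrable.comp_sub_right (f := fun σ : EuclideanSpace ℝ (Fin d) =>
    Real.exp (-(1 / r) * ‖σ‖ ^ 2)) ?_ m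
  have h := GaussianFourier.integrable_cexp_neg_mul_sq_norm_add (V := EuclideanSpace ℝ (Fin d))
    (b := (1/r : ℂ)) (by simpa using by positivity : (0:ℝ) < (1/r : ℂ).re) 0 0
  have := h.norm
  simp only [zero_mul, add_zero] at this
  convert this using 2 with σ
  · rfl
  rw [show (-(1/(r:ℂ)) * (‖σ‖:ℂ)^2) = ((-(1/r) * ‖σ‖^2 : ℝ) : ℂ) by push_cast; ring,
    Complex.norm_exp, Complex.ofReal_re]

end aux
section key
variable {d : ℕ} {r : ℝ}

lemma integrableProd (hr : 0 < r) (t a b : EuclideanSpace ℝ (Fin d)) :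
    Integrable (fun σ : EuclideanSpace ℝ (Fin d) =>
      gaussDens d r (σ - a) * gaussDens d r (t - σ - b)) := by
  simp only [prodEq hr t a b]
  exact (integrableExp hr ((2:ℝ)⁻¹ • (t + a - b))).const_mul _

lemma keyIneq (hr : 0 < r) (t a b τ : EuclideanSpace ℝ (Fin d)) :
    (Real.pi * r) ^ ((d:ℝ) / 2) * (gaussDens d r (τ - a) * gaussDens d r (t - τ - b))
      ≤ ∫ σ : EuclideanSpace ℝ (Fin d), gaussDens d r (σ - a) * gaussDens d r (t - σ - b) := by
  have hCpos : 0 ≤ (2 * Real.pi * r) ^ (-(d:ℝ)) * Real.exp (-‖t - a - b‖ ^ 2 / (4 * r)) := by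
    positivity
  have hint : (∫ σ : EuclideanSpace ℝ (Fin d),
      gaussDens d r (σ - a) * gaussDens d r (t - σ - b))
      = ((2 * Real.pi * r) ^ (-(d:ℝ)) * Real.exp (-‖t - a - b‖ ^ 2 / (4 * r)))
        * (Real.pi * r) ^ ((d:ℝ) / 2) := by
    simp only [prodEq hr t a b]
    rw [MeasureTheory.integral_const_mul, intExp hr]
  rw [hint, prodEq hr t a b τ]
  have hexp : Real.exp (-(1 / r) * ‖τ - (2:ℝ)⁻¹ • (t + a - b)‖ ^ 2) ≤ 1 := by
    rw [Real.exp_le_one_iff]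
    have : 0 ≤ (1 / r) * ‖τ - (2:ℝ)⁻¹ • (t + a - b)‖ ^ 2 := by positivity
    linarith
  have hpowpos : (0:ℝ) ≤ (Real.pi * r) ^ ((d:ℝ) / 2) := by positivity
  have hep : 0 ≤ Real.exp (-(1 / r) * ‖τ - (2:ℝ)⁻¹ • (t + a - b)‖ ^ 2) :=
    (Real.exp_pos _).le
  nlinarith [mul_nonneg hCpos hpowpos, hexp]

end key

/-- Let `p` and `q` be finite mixtures of `N(·, rI_d)` Gaussian densities
on `ℝ^d`. Then the convolution `p ∗ q` satisfies
`(p ∗ q)(t) ≥ (πr)^{d/2} · p(τ) · q(t − τ)` for every `t, τ ∈ ℝ^d`. -/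
theorem mixture_convolution_ge
    (d : ℕ) (hd : 1 ≤ d) (r : ℝ) (hr : 0 < r) (N M : ℕ) (hN : 1 ≤ N) (hM : 1 ≤ M)
    (w : Fin N → ℝ) (v : Fin M → ℝ)
    (hw : ∀ i, 0 ≤ w i) (hv : ∀ j, 0 ≤ v j)
    (hw1 : ∑ i, w i = 1) (hv1 : ∑ j, v j = 1)
    (x : Fin N → EuclideanSpace ℝ (Fin d)) (y : Fin M → EuclideanSpace ℝ (Fin d))
    (p q : EuclideanSpace ℝ (Fin d) → ℝ)
    (hp : ∀ z, p z = ∑ i, w i * gaussDens d r (z - x i))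
    (hq : ∀ z, q z = ∑ j, v j * gaussDens d r (z - y j)) :
    ∀ t τ : EuclideanSpace ℝ (Fin d),
      (Real.pi * r) ^ ((d : ℝ) / 2) * p τ * q (t - τ) ≤ ∫ σ, p σ * q (t - σ) := by
  intro t τ
  have h1 : ∀ σ : EuclideanSpace ℝ (Fin d), p σ * q (t - σ)
      = ∑ i, ∑ j, (w i * v j) *
        (gaussDens d r (σ - x i) * gaussDens d r (t - σ - y j)) := by
    intro σ
    rw [hp, hq, Finset.sum_mul_sum]
    exact Finset.sum_congr rfl fun i _ => Finset.sum_congr rfl fun j _ => by ring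
  have h2 : (∫ σ, p σ * q (t - σ))
      = ∑ i, ∑ j, (w i * v j) * ∫ σ : EuclideanSpace ℝ (Fin d),
          gaussDens d r (σ - x i) * gaussDens d r (t - σ - y j) := by
    simp only [h1]
    rw [MeasureTheory.integral_finset_sum _ (fun i _ =>
      integrable_finset_sum _ (fun j _ => (integrableProd hr t (x i) (y j)).const_mul _))]
    refine Finset.sum_congr rfl fun i _ => ?_
    rw [MeasureTheory.integral_finset_sum _ (fun j _ =>
      (integrableProd hr t (x i) (y j)).const_mul _)]
    exact Finset.sum_congr rfl fun j _ => MeasureTheory.integral_const_mul _ _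
  have h3 : (Real.pi * r) ^ ((d : ℝ) / 2) * p τ * q (t - τ)
      = ∑ i, ∑ j, (w i * v j) * ((Real.pi * r) ^ ((d : ℝ) / 2) *
          (gaussDens d r (τ - x i) * gaussDens d r (t - τ - y j))) := by
    rw [mul_assoc, h1 τ]
    simp only [Finset.mul_sum]
    exact Finset.sum_congr rfl fun i _ => Finset.sum_congr rfl fun j _ => by ring
  rw [h2, h3]
  refine Finset.sum_le_sum fun i _ => Finset.sum_le_sum fun j _ => ?_
  exact mul_le_mul_of_nonneg_left (keyIneq hr t (x i) (y j) τ)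
    (mul_nonneg (hw i) (hv j))
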